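/- Let p > 5, let N ≥ 2 be an integer, let α < 0 and ω > α²/N², and define φ : [0,∞) → ℝ by φ(x) = (((p+1)ω/2)·sech²(((p−1)√ω/2)·x − arctanh(α/(N√ω))))^{1/(p−1)}. Let ξ₁ ∈ (0,1) be the unique solution of ((p−5)/2)·∫_ξ^1 (1−s²)^{2/(p−1)} ds = ξ·(1−ξ²)^{2/(p−1)} in (0,1). Then the inequality ∫₀^∞ φ'(x)² dx ≤ ((p−1)(p−3)/(4(p+1)))·∫₀^∞ φ(x)^{p+1} dx holds if and only if ω ≥ α²/(N²ξ₁²). -/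

import Mathlib

open MeasureTheory Real Set Filter Topology

/-- Inverse hyperbolic tangent. -/
noncomputable def arctanh (x : ℝ) : ℝ := Real.log ((1 + x) / (1 - x)) / 2

lemma arctanh_tanh (t : ℝ) : arctanh (Real.tanh t) = t := by
  unfold arctanh
  have hc := Real.cosh_pos t
  have h1 : 1 + Real.tanh t = Real.exp t / Real.cosh t := by
    rw [Real.tanh_eq_sinh_div_cosh, ← Real.cosh_add_sinh]; field_simp
  have h2 : 1 - Real.tanh t = Real.exp (-t) / Real.cosh t := by
    rw [Real.tanh_eq_sinh_div_cosh, ← Real.cosh_sub_sinh]; field_simp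
  rw [h1, h2, div_div_div_cancel_right₀, ← Real.exp_sub, Real.log_exp]
  · ring
  · exact hc.ne'

lemma tanh_eq_exp (t : ℝ) : Real.tanh t = (Real.exp (2*t) - 1) / (Real.exp (2*t) + 1) := by
  rw [Real.tanh_eq_sinh_div_cosh, Real.sinh_eq, Real.cosh_eq,
    show (2:ℝ)*t = t + t by ring, Real.exp_add, Real.exp_neg]
  have h := (Real.exp_pos t)
  have h2 : (0:ℝ) < Real.exp t + (Real.exp t)⁻¹ := by positivity
  rw [div_eq_div_iff (by positivity) (by positivity)]
  field_simp

lemma tanh_arctanh {x : ℝ} (h1 : -1 < x) (h2 : x < 1) : Real.tanh (arctanh x) = x := by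
  have hx1 : (0:ℝ) < 1 - x := by linarith
  have hx2 : (0:ℝ) < 1 + x := by linarith
  have hu : (0:ℝ) < (1 + x)/(1 - x) := by positivity
  rw [tanh_eq_exp]
  unfold arctanh
  rw [show 2 * (Real.log ((1 + x) / (1 - x)) / 2) = Real.log ((1+x)/(1-x)) by ring,
    Real.exp_log hu]
  rw [div_eq_iff (by positivity)]
  field_simp
  ring

lemma tanh_strictMono : StrictMono Real.tanh := by
  intro s t hst
  rw [Real.tanh_eq_sinh_div_cosh, Real.tanh_eq_sinh_div_cosh,
    div_lt_div_iff₀ (Real.cosh_pos s) (Real.cosh_pos t)]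
  have : (0:ℝ) < Real.sinh (t - s) := by
    rw [show t - s = t - s by rfl]
    have := Real.sinh_lt_sinh.2 (by linarith : (0:ℝ) < t - s)
    simpa using this
  rw [Real.sinh_sub] at this
  linarith

lemma tanh_lt_one (t : ℝ) : Real.tanh t < 1 := by
  rw [Real.tanh_eq_sinh_div_cosh, div_lt_one (Real.cosh_pos t)]
  have h := Real.cosh_sub_sinh t
  have := Real.exp_pos (-t)
  linarith

lemma cosh_sq_arctanh {x : ℝ} (h1 : -1 < x) (h2 : x < 1) :
    Real.cosh (arctanh x) ^ 2 = 1 / (1 - x^2) := by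
  have ht := tanh_arctanh h1 h2
  have hc := Real.cosh_pos (arctanh x)
  have hs : Real.sinh (arctanh x) = x * Real.cosh (arctanh x) := by
    rw [Real.tanh_eq_sinh_div_cosh] at ht
    field_simp at ht; linarith [ht]
  have h3 := Real.cosh_sq_sub_sinh_sq (arctanh x)
  rw [hs] at h3
  have hx : 1 - x^2 ≠ 0 := by nlinarith
  field_simp
  nlinarith [h3]

lemma arctanh_neg (x : ℝ) (h1 : -1 < x) (h2 : x < 1) : arctanh (-x) = - arctanh x := by
  unfold arctanh
  have hx1 : (0:ℝ) < 1 - x := by linarith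
  have hx2 : (0:ℝ) < 1 + x := by linarith
  rw [show 1 + -x = 1 - x by ring, show 1 - -x = 1 + x by ring]
  have : (1 - x)/(1 + x) = ((1 + x)/(1 - x))⁻¹ := by rw [inv_div]
  rw [this, Real.log_inv]
  ring

lemma arctanh_strictMonoOn : StrictMonoOn arctanh (Set.Ioo (-1:ℝ) 1) := by
  intro x hx y hy hxy
  unfold arctanh
  have hx1 : (0:ℝ) < 1 - x := by linarith [hx.2]
  have hx2 : (0:ℝ) < 1 + x := by linarith [hx.1]
  have hy1 : (0:ℝ) < 1 - y := by linarith [hy.2]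
  have hy2 : (0:ℝ) < 1 + y := by linarith [hy.1]
  have : (1 + x)/(1 - x) < (1 + y)/(1 - y) := by
    rw [div_lt_div_iff₀ hx1 hy1]; nlinarith
  have hlog := Real.log_lt_log (by positivity) this
  linarith

lemma hasDerivAt_arctanh {x : ℝ} (h1 : -1 < x) (h2 : x < 1) :
    HasDerivAt arctanh (1/(1 - x^2)) x := by
  have hx1 : (0:ℝ) < 1 - x := by linarith
  have hx2 : (0:ℝ) < 1 + x := by linarith
  have hd : HasDerivAt (fun y : ℝ => (1 + y)/(1 - y)) (2/(1-x)^2) x := by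
    have h1' : HasDerivAt (fun y : ℝ => 1 + y) 1 x := by
      simpa using (hasDerivAt_id x).const_add 1
    have h2' : HasDerivAt (fun y : ℝ => 1 - y) (-1) x := by
      simpa using (hasDerivAt_id x).const_sub 1
    have := h1'.div h2' hx1.ne'
    refine this.congr_deriv ?_
    field_simp
    ring
  have hlog := (hd.log (by positivity)).div_const 2
  have : (fun y : ℝ => Real.log ((1 + y)/(1 - y)) / 2) = arctanh := rfl
  rw [this] at hlog
  refine hlog.congr_deriv ?_
  rw [show 1 - x^2 = (1-x)*(1+x) by ring]
  field_simp

noncomputable def Bf (β t : ℝ) : ℝ := ∫ s in t..1, (1 - s^2)^β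
noncomputable def Af (β t : ℝ) : ℝ := ∫ s in t..1, s^2 * (1 - s^2)^(β-1)

variable {β : ℝ}

lemma cont_f2 (hβ0 : 0 < β) : Continuous fun s : ℝ => (1 - s^2)^β :=
  (continuous_const.sub (continuous_pow 2)).rpow_const (fun _ => Or.inr hβ0.le)

lemma integrable_bound (hβ0 : 0 < β) :
    IntervalIntegrable (fun s : ℝ => (1-s)^(β-1)) volume 0 1 := by
  have h := intervalIntegral.intervalIntegrable_rpow' (a := (0:ℝ)) (b := 1) (r := β - 1) (by linarith)
  have h2 := h.comp_sub_left 1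
  simpa using h2.symm

lemma f1_le {x : ℝ} (hβ1 : β < 1) (hx0 : 0 ≤ x) (hx1 : x ≤ 1) :
    x^2 * (1 - x^2)^(β-1) ≤ (1-x)^(β-1) := by
  rcases eq_or_lt_of_le hx1 with rfl | hx1'
  · simp [Real.zero_rpow (by linarith : β - 1 ≠ 0)]
  · have h1 : (0:ℝ) < 1 - x := by linarith
    have h2 : 1 - x ≤ 1 - x^2 := by nlinarith
    have h3 : (1 - x^2)^(β-1) ≤ (1-x)^(β-1) :=
      Real.rpow_le_rpow_of_nonpos h1 h2 (by linarith)
    have h4 : (0:ℝ) ≤ (1 - x^2)^(β-1) := Real.rpow_nonneg (by nlinarith) _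
    nlinarith [sq_nonneg x]

lemma f1_nonneg {x : ℝ} (hx0 : 0 ≤ x) (hx1 : x ≤ 1) :
    0 ≤ x^2 * (1 - x^2)^(β-1) := by
  have : (0:ℝ) ≤ 1 - x^2 := by nlinarith
  positivity

lemma measurable_f1 : Measurable fun s : ℝ => s^2 * (1 - s^2)^(β-1) :=
  (measurable_id.pow_const 2).mul
    ((measurable_const.sub (measurable_id.pow_const 2)).pow measurable_const)

lemma integrable_f1 (hβ0 : 0 < β) (hβ1 : β < 1) {t : ℝ} (ht : 0 ≤ t) (ht1 : t ≤ 1) :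
    IntervalIntegrable (fun s : ℝ => s^2 * (1-s^2)^(β-1)) volume t 1 := by
  have h01 : IntervalIntegrable (fun s : ℝ => s^2 * (1-s^2)^(β-1)) volume 0 1 := by
    apply (integrable_bound hβ0).mono_fun
      (measurable_f1.aestronglyMeasurable)
    filter_upwards [ae_restrict_mem measurableSet_uIoc] with x hx
    rw [Set.uIoc_of_le (by norm_num : (0:ℝ) ≤ 1)] at hx
    have hx0 : (0:ℝ) < x := hx.1
    have hx1 : x ≤ 1 := hx.2
    rw [Real.norm_eq_abs, Real.norm_eq_abs,
      abs_of_nonneg (f1_nonneg hx0.le hx1),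
      abs_of_nonneg (Real.rpow_nonneg (by linarith) _)]
    exact f1_le hβ1 hx0.le hx1
  exact h01.mono_set (Set.uIcc_subset_uIcc
    (Set.mem_uIcc.2 (Or.inl ⟨ht, ht1⟩)) (by simp [Set.mem_uIcc]))

lemma hasDerivAt_Bf (hβ0 : 0 < β) (t : ℝ) : HasDerivAt (Bf β) (-(1-t^2)^β) t := by
  unfold Bf
  exact intervalIntegral.integral_hasDerivAt_left
    ((cont_f2 hβ0).intervalIntegrable _ _)
    ((cont_f2 hβ0).stronglyMeasurableAtFilter _ _)
    (cont_f2 hβ0).continuousAt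

lemma continuous_Bf (hβ0 : 0 < β) : Continuous (Bf β) :=
  continuous_iff_continuousAt.2 fun t => (hasDerivAt_Bf hβ0 t).continuousAt

lemma cont_f1_at (hβ0 : 0 < β) {t : ℝ} (ht : t ∈ Set.Ioo (-1:ℝ) 1) :
    ContinuousAt (fun s : ℝ => s^2 * (1-s^2)^(β-1)) t := by
  have hne : 1 - t^2 ≠ 0 := by nlinarith [ht.1, ht.2]
  exact (continuous_pow 2).continuousAt.mul
    (((continuous_const.sub (continuous_pow 2)).continuousAt).rpow_const (Or.inl hne))

lemma hasDerivAt_Af (hβ0 : 0 < β) (hβ1 : β < 1) {t : ℝ} (ht : t ∈ Set.Ioo (0:ℝ) 1) :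
    HasDerivAt (Af β) (-(t^2 * (1-t^2)^(β-1))) t := by
  unfold Af
  refine intervalIntegral.integral_hasDerivAt_left
    (integrable_f1 hβ0 hβ1 ht.1.le ht.2.le) ?_
    (cont_f1_at hβ0 ⟨by linarith [ht.1], ht.2⟩)
  refine ContinuousAt.stronglyMeasurableAtFilter (s := Set.Ioo (-1:ℝ) 1) isOpen_Ioo
    (fun x hx => cont_f1_at hβ0 hx) t ⟨by linarith [ht.1], ht.2⟩

lemma Af_nonneg {t : ℝ} (ht : 0 ≤ t) (ht1 : t ≤ 1) : 0 ≤ Af β t := by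
  unfold Af
  apply intervalIntegral.integral_nonneg ht1
  intro x hx
  exact f1_nonneg (le_trans ht hx.1) hx.2

lemma integral_bound_eq (hβ0 : 0 < β) (t : ℝ) :
    (∫ s in t..1, (1-s)^(β-1)) = (1-t)^β / β := by
  have h := intervalIntegral.integral_comp_sub_left (a := t) (b := 1)
    (fun u : ℝ => u^(β-1)) 1
  rw [h]
  rw [integral_rpow (Or.inl (by linarith))]
  rw [show β - 1 + 1 = β by ring, show (1:ℝ) - 1 = 0 by ring, Real.zero_rpow hβ0.ne']
  ring

lemma Af_le (hβ0 : 0 < β) (hβ1 : β < 1) {t : ℝ} (ht : 0 ≤ t) (ht1 : t ≤ 1) :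
    Af β t ≤ (1-t)^β / β := by
  rw [← integral_bound_eq hβ0 t]
  unfold Af
  apply intervalIntegral.integral_mono_on ht1
    (integrable_f1 hβ0 hβ1 ht ht1)
    ((integrable_bound hβ0).mono_set (Set.uIcc_subset_uIcc
      (Set.mem_uIcc.2 (Or.inl ⟨ht, ht1⟩)) (by simp [Set.mem_uIcc])))
  intro x hx
  exact f1_le hβ1 (le_trans ht hx.1) hx.2

lemma tendsto_Af (hβ0 : 0 < β) (hβ1 : β < 1) :
    Tendsto (Af β) (𝓝[<] (1:ℝ)) (𝓝 0) := by
  have hb : Tendsto (fun t : ℝ => (1-t)^β / β) (𝓝[<] (1:ℝ)) (𝓝 0) := by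
    have hc : ContinuousAt (fun t : ℝ => (1-t)^β / β) 1 := by
      apply ContinuousAt.div_const
      exact ((continuous_const.sub continuous_id).continuousAt).rpow_const (Or.inr hβ0.le)
    have h2 : Tendsto (fun t : ℝ => (1-t)^β / β) (𝓝[<] (1:ℝ)) (𝓝 ((1-1)^β / β)) :=
      tendsto_nhdsWithin_of_tendsto_nhds hc.tendsto
    simpa [Real.zero_rpow hβ0.ne'] using h2
  apply squeeze_zero' ?_ ?_ hb
  · filter_upwards [Ioo_mem_nhdsLT_of_mem (Set.mem_Ioc.2 ⟨(by norm_num : (0:ℝ) < 1), le_refl 1⟩)]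
      with t ht
    exact Af_nonneg ht.1.le ht.2.le
  · filter_upwards [Ioo_mem_nhdsLT_of_mem (Set.mem_Ioc.2 ⟨(by norm_num : (0:ℝ) < 1), le_refl 1⟩)]
      with t ht
    exact Af_le hβ0 hβ1 ht.1.le ht.2.le

lemma hasDerivAt_third (hβ0 : 0 < β) {t : ℝ} (ht : t ∈ Set.Ioo (0:ℝ) 1) :
    HasDerivAt (fun u : ℝ => u * (1-u^2)^β)
      (1 * (1-t^2)^β + t * ((-(2*t)) * β * (1-t^2)^(β-1))) t := by
  have hne : 1 - t^2 ≠ 0 := by nlinarith [ht.1, ht.2]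
  have h1 : HasDerivAt (fun u : ℝ => 1 - u^2) (-(2*t)) t := by
    simpa using (hasDerivAt_pow 2 t).const_sub 1
  have h2 := h1.rpow_const (p := β) (Or.inl hne)
  exact (hasDerivAt_id t).mul h2

lemma Af_eq (hβ0 : 0 < β) (hβ1 : β < 1) {t : ℝ} (ht : t ∈ Set.Ioo (0:ℝ) 1) :
    2*β*Af β t = Bf β t + t*(1-t^2)^β := by
  set D : ℝ → ℝ := fun u => 2*β*Af β u - Bf β u - u*(1-u^2)^β with hD
  have hderiv : ∀ u ∈ Set.Ioo (0:ℝ) 1, HasDerivAt D 0 u := by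
    intro u hu
    have h1 := (hasDerivAt_Af hβ0 hβ1 hu).const_mul (2*β)
    have h2 := hasDerivAt_Bf hβ0 u
    have h3 := hasDerivAt_third hβ0 hu
    have h4 := (h1.sub h2).sub h3
    refine h4.congr_deriv ?_
    have hne : (1:ℝ) - u^2 ≠ 0 := by nlinarith [hu.1, hu.2]
    rw [Real.rpow_sub_one hne]
    field_simp
    ring
  have hconst : ∀ u ∈ Set.Ioo (0:ℝ) 1, ∀ v ∈ Set.Ioo (0:ℝ) 1, u ≤ v → D v = D u := by
    intro u hu v hv huv
    have hsub : Set.Icc u v ⊆ Set.Ioo (0:ℝ) 1 := fun x hx =>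
      ⟨lt_of_lt_of_le hu.1 hx.1, lt_of_le_of_lt hx.2 hv.2⟩
    exact constant_of_has_deriv_right_zero
      (fun x hx => (hderiv x (hsub hx)).continuousAt.continuousWithinAt)
      (fun x hx => (hderiv x (hsub ⟨hx.1, hx.2.le⟩)).hasDerivWithinAt) v ⟨huv, le_refl v⟩
  have hlim : Tendsto D (𝓝[<] (1:ℝ)) (𝓝 0) := by
    have h1 : Tendsto (fun u => 2*β*Af β u) (𝓝[<] (1:ℝ)) (𝓝 (2*β*0)) :=
      (tendsto_Af hβ0 hβ1).const_mul (2*β)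
    have h2 : Tendsto (Bf β) (𝓝[<] (1:ℝ)) (𝓝 (Bf β 1)) :=
      tendsto_nhdsWithin_of_tendsto_nhds (hasDerivAt_Bf hβ0 1).continuousAt.tendsto
    have hB1 : Bf β 1 = 0 := intervalIntegral.integral_same
    have h3 : Tendsto (fun u : ℝ => u*(1-u^2)^β) (𝓝[<] (1:ℝ))
        (𝓝 (1*((1-(1:ℝ)^2)^β))) := by
      apply tendsto_nhdsWithin_of_tendsto_nhds
      exact (continuousAt_id.mul
        (((continuous_const.sub (continuous_pow 2)).continuousAt).rpow_const
          (Or.inr hβ0.le))).tendsto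
    have h4 := (h1.sub h2).sub h3
    have : (2*β*0 - Bf β 1 - 1*((1-(1:ℝ)^2)^β)) = 0 := by
      rw [hB1]
      norm_num [Real.zero_rpow hβ0.ne']
    rwa [this] at h4
  have hev : D =ᶠ[𝓝[<] (1:ℝ)] fun _ => D t := by
    filter_upwards [Ioo_mem_nhdsLT_of_mem (Set.mem_Ioc.2 ⟨ht.2, le_refl 1⟩)] with u hu
    exact hconst t ht u ⟨lt_trans ht.1 hu.1, hu.2⟩ hu.1.le
  have hDt : D t = 0 :=
    tendsto_nhds_unique ((tendsto_const_nhds : Tendsto (fun _ : ℝ => D t) (𝓝[<] (1:ℝ)) (𝓝 (D t))).congr' hev.symm) hlim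
  have : 2*β*Af β t - Bf β t - t*(1-t^2)^β = 0 := hDt
  linarith


lemma Bf_pos (hβ0 : 0 < β) {t : ℝ} (ht0 : -1 < t) (ht : t < 1) : 0 < Bf β t := by
  unfold Bf
  apply intervalIntegral.intervalIntegral_pos_of_pos_on
    ((cont_f2 hβ0).intervalIntegrable _ _)
  · intro x hx
    exact Real.rpow_pos_of_pos (by nlinarith [hx.1, hx.2]) β
  · exact ht

lemma Bf_le (hβ0 : 0 < β) {t : ℝ} (ht0 : 0 ≤ t) (ht1 : t ≤ 1) :
    Bf β t ≤ (1-t) * (1-t^2)^β := by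
  unfold Bf
  have h := intervalIntegral.integral_mono_on (f := fun s : ℝ => (1-s^2)^β)
    (g := fun _ : ℝ => (1-t^2)^β) ht1
    ((cont_f2 hβ0).intervalIntegrable _ _) (intervalIntegrable_const (μ := volume))
    (fun x hx => Real.rpow_le_rpow (by nlinarith [hx.1, hx.2])
      (by nlinarith [hx.1, hx.2]) hβ0.le)
  simpa using h

lemma sign_iff (p ξ₁ ξ0 : ℝ) (hp : 5 < p) (hξ₁ : ξ₁ ∈ Set.Ioo (0:ℝ) 1)
    (hξeq : (p-5)/2 * Bf (2/(p-1)) ξ₁ = ξ₁ * (1 - ξ₁^2) ^ (2/(p-1)))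
    (huniq : ∀ ξ ∈ Set.Ioo (0:ℝ) 1,
      (p-5)/2 * Bf (2/(p-1)) ξ = ξ * (1 - ξ^2) ^ (2/(p-1)) → ξ = ξ₁)
    (hξ0 : ξ0 ∈ Set.Ioo (0:ℝ) 1) :
    (0 ≤ (p-5)/2 * Bf (2/(p-1)) ξ0 - ξ0 * (1 - ξ0^2) ^ (2/(p-1))) ↔ ξ0 ≤ ξ₁ := by
  set β := 2/(p-1) with hβdef
  have hp1 : (0:ℝ) < p - 1 := by linarith
  have hβ0 : 0 < β := by rw [hβdef]; positivity
  have hβ1 : β < 1 := by rw [hβdef, div_lt_one (by linarith)]; linarith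
  set g : ℝ → ℝ := fun t => (p-5)/2 * Bf β t - t*(1-t^2)^β with hgdef
  have hgcont : Continuous g := by
    apply Continuous.sub (continuous_const.mul (continuous_Bf hβ0))
    exact continuous_id.mul ((continuous_const.sub (continuous_pow 2)).rpow_const
      (fun _ => Or.inr hβ0.le))
  have hg0 : 0 < g 0 := by
    have hb := Bf_pos hβ0 (by norm_num : (-1:ℝ) < 0) (by norm_num)
    have h5 : (0:ℝ) < (p-5)/2 := by linarith
    have he : g 0 = (p-5)/2 * Bf β 0 := by simp [hgdef]
    rw [he]
    exact mul_pos h5 hb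
  have hneg : ∀ t, (p-5)/(p-3) < t → t < 1 → g t < 0 := by
    intro t h1 h2
    have hp3 : (0:ℝ) < p - 3 := by linarith
    have ht0 : 0 ≤ t := le_trans (div_nonneg (by linarith) (by linarith)) h1.le
    have hb := Bf_le hβ0 ht0 h2.le
    have hpos : 0 < (1-t^2)^β := Real.rpow_pos_of_pos (by nlinarith) β
    have h3 : (p-5)/2*(1-t) - t < 0 := by
      rw [div_lt_iff₀ hp3] at h1
      nlinarith
    have h5 : (0:ℝ) < (p-5)/2 := by linarith
    have h6 := mul_le_mul_of_nonneg_left hb h5.le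
    have h4 : g t ≤ ((p-5)/2*(1-t) - t) * (1-t^2)^β := by
      simp only [hgdef]
      nlinarith [h6]
    exact lt_of_le_of_lt h4 (mul_neg_of_neg_of_pos h3 hpos)
  have hmax1 : (p-5)/(p-3) < 1 := by
    rw [div_lt_one (by linarith)]; linarith
  constructor
  · intro hg
    by_contra hlt
    push_neg at hlt
    rcases eq_or_lt_of_le hg with heq | hgt
    · have := huniq ξ0 hξ0 (by linarith [heq.symm] : (p-5)/2 * Bf β ξ0 = ξ0 * (1-ξ0^2)^β)
      linarith [hlt]
    · set t0 := (max ξ0 ((p-5)/(p-3)) + 1)/2 with ht0def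
      have hm1 : max ξ0 ((p-5)/(p-3)) < 1 := max_lt hξ0.2 hmax1
      have ht0a : ξ0 < t0 := by
        have := le_max_left ξ0 ((p-5)/(p-3))
        rw [ht0def]; linarith
      have ht0b : (p-5)/(p-3) < t0 := by
        have := le_max_right ξ0 ((p-5)/(p-3))
        rw [ht0def]; linarith
      have ht0c : t0 < 1 := by rw [ht0def]; linarith
      have hgt0 : g t0 < 0 := hneg t0 ht0b ht0c
      have hsub : Set.Ioo (g t0) (g ξ0) ⊆ g '' Set.Ioo ξ0 t0 :=
        intermediate_value_Ioo' ht0a.le hgcont.continuousOn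
      obtain ⟨z, hz, hz0⟩ := hsub ⟨hgt0, hgt⟩
      have hz01 : z ∈ Set.Ioo (0:ℝ) 1 := ⟨lt_trans hξ0.1 hz.1, lt_trans hz.2 ht0c⟩
      have heqz : (p-5)/2 * Bf β z = z * (1-z^2)^β := by
        have : g z = 0 := hz0
        simp only [hgdef] at this
        linarith
      have := huniq z hz01 heqz
      linarith [hz.1, hlt]
  · intro hle
    by_contra hneg'
    push_neg at hneg'
    have hsub : Set.Ioo (g ξ0) (g 0) ⊆ g '' Set.Ioo 0 ξ0 :=
      intermediate_value_Ioo' hξ0.1.le hgcont.continuousOn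
    obtain ⟨z, hz, hz0⟩ := hsub ⟨hneg', hg0⟩
    have hz01 : z ∈ Set.Ioo (0:ℝ) 1 := ⟨hz.1, lt_trans hz.2 hξ0.2⟩
    have heqz : (p-5)/2 * Bf β z = z * (1-z^2)^β := by
      have : g z = 0 := hz0
      simp only [hgdef] at this
      linarith
    have := huniq z hz01 heqz
    linarith [hz.2]

set_option maxHeartbeats 4000000 in
/-- For the ground-state profile `φ` of the NLS-δ equation on a star graph with `N` edges
(with `α < 0`, `p > 5`), the second-derivative condition
`∫₀^∞ φ'² ≤ ((p−1)(p−3)/(4(p+1)))·∫₀^∞ φ^{p+1}` holds iff `ω ≥ α²/(N²ξ₁²)`,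
where `ξ₁` is the unique solution in `(0,1)` of
`((p−5)/2)·∫_ξ^1 (1−s²)^{2/(p−1)} ds = ξ·(1−ξ²)^{2/(p−1)}`. -/
theorem second_derivative_condition_iff (p : ℝ) (hp : 5 < p) (N : ℕ) (hN : 2 ≤ N)
    (α ω : ℝ) (hα : α < 0) (hω : α ^ 2 / (N : ℝ) ^ 2 < ω)
    (φ : ℝ → ℝ)
    (hφ : φ = fun x : ℝ => ((p + 1) * ω / 2 *
      (1 / Real.cosh ((p - 1) * Real.sqrt ω / 2 * x
        - arctanh (α / ((N : ℝ) * Real.sqrt ω)))) ^ 2) ^ (1 / (p - 1)))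
    (ξ₁ : ℝ) (hξ₁ : ξ₁ ∈ Set.Ioo (0 : ℝ) 1)
    (hξeq : (p - 5) / 2 * (∫ s in ξ₁..1, (1 - s ^ 2) ^ (2 / (p - 1)))
      = ξ₁ * (1 - ξ₁ ^ 2) ^ (2 / (p - 1)))
    (huniq : ∀ ξ ∈ Set.Ioo (0 : ℝ) 1,
      (p - 5) / 2 * (∫ s in ξ..1, (1 - s ^ 2) ^ (2 / (p - 1)))
        = ξ * (1 - ξ ^ 2) ^ (2 / (p - 1)) → ξ = ξ₁) :
    ((∫ x in Set.Ioi (0 : ℝ), (deriv φ x) ^ 2)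
        ≤ (p - 1) * (p - 3) / (4 * (p + 1)) * ∫ x in Set.Ioi (0 : ℝ), φ x ^ (p + 1))
      ↔ α ^ 2 / ((N : ℝ) ^ 2 * ξ₁ ^ 2) ≤ ω := by
  have hαne : α ≠ 0 := ne_of_lt hα
  have hN0 : (0:ℝ) < (N:ℝ) := by positivity
  have hα2 : 0 < α^2 := by positivity
  have hω0 : 0 < ω := lt_trans (by positivity) hω
  set w := Real.sqrt ω with hwdef
  have hw0 : 0 < w := Real.sqrt_pos.2 hω0
  have hww : w * w = ω := Real.mul_self_sqrt hω0.le
  have hkey : α^2 < ω * (N:ℝ)^2 := (div_lt_iff₀ (by positivity)).1 hω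
  set c0 := α / ((N:ℝ) * w) with hc0def
  have hc0neg : c0 < 0 := div_neg_of_neg_of_pos hα (by positivity)
  have hc0gt : -1 < c0 := by
    rw [hc0def, lt_div_iff₀ (by positivity : (0:ℝ) < (N:ℝ)*w)]
    nlinarith [hkey, hww, mul_pos hN0 hw0]
  set ξ0 := -c0 with hξ0def
  have hξ0mem : ξ0 ∈ Set.Ioo (0:ℝ) 1 := ⟨by simp [hξ0def]; linarith, by simp [hξ0def]; linarith⟩
  have hp1 : (0:ℝ) < p - 1 := by linarith
  set β : ℝ := 2/(p-1) with hβdef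
  set r : ℝ := 1/(p-1) with hrdef
  have hβ0 : 0 < β := by positivity
  have hβ1 : β < 1 := by rw [hβdef, div_lt_one hp1]; linarith
  have hrr : r + r = β := by rw [hrdef, hβdef]; ring
  set aa : ℝ := (p-1)*w/2 with haadef
  have haa0 : 0 < aa := by positivity
  set K : ℝ := (p+1)*ω/2 with hKdef
  have hK0 : 0 < K := by positivity
  have hKβ : 0 < K^β := Real.rpow_pos_of_pos hK0 β
  set b : ℝ := arctanh c0 with hbdef
  -- φ in terms of our constants
  have hφ' : φ = fun x : ℝ => (K * (1 / Real.cosh (aa*x - b)) ^ 2) ^ r := by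
    rw [hφ]
  -- derivative of φ
  have hderivφ : ∀ x : ℝ, HasDerivAt φ
      (-(aa*β) * ((K * (1/Real.cosh (aa*x-b))^2)^r)
        * (Real.sinh (aa*x-b)/Real.cosh (aa*x-b))) x := by
    intro x
    have hc := Real.cosh_pos (aa*x-b)
    have h1 : HasDerivAt (fun x : ℝ => aa*x - b) aa x := by
      simpa using ((hasDerivAt_id x).const_mul aa).sub_const b
    have h2 : HasDerivAt (fun x : ℝ => Real.cosh (aa*x-b))
        (Real.sinh (aa*x-b) * aa) x := (Real.hasDerivAt_cosh _).comp x h1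
    have h3 := h2.inv hc.ne'
    have h4 := h3.pow 2
    have h5 := h4.const_mul K
    have hpos : 0 < K * ((Real.cosh (aa*x-b))⁻¹)^2 := by positivity
    have h6 := h5.rpow_const (p := r) (Or.inl hpos.ne')
    have hfun : (fun x : ℝ => (K * ((Real.cosh (aa*x-b))⁻¹)^2)^r)
        = φ := by rw [hφ']; simp only [one_div]
    rw [← hfun]
    refine h6.congr_deriv ?_
    simp only [Pi.inv_apply, Pi.pow_apply]
    rw [Real.rpow_sub_one hpos.ne']
    simp only [one_div]
    field_simp
    ring
    rw [mul_inv_cancel₀ hc.ne', ← hrr]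
    ring
  -- substitution map
  set ψ : ℝ → ℝ := fun s => (arctanh s + b)/aa with hψdef
  have hsub1 : Set.Ioo ξ0 1 ⊆ Set.Ioo (-1:ℝ) 1 := fun s hs =>
    ⟨lt_trans (by linarith [hξ0mem.1]) hs.1, hs.2⟩
  have hξ0mem' : ξ0 ∈ Set.Ioo (-1:ℝ) 1 := ⟨by linarith [hξ0mem.1], hξ0mem.2⟩
  have harcξ0 : arctanh ξ0 = -b := by
    rw [hξ0def, arctanh_neg c0 hc0gt (by linarith), hbdef]
  have himg : Set.Ioi (0:ℝ) = ψ '' Set.Ioo ξ0 1 := by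
    apply Set.eq_of_subset_of_subset
    · intro x hx
      have hx0 : (0:ℝ) < x := hx
      refine ⟨Real.tanh (aa*x - b), ⟨?_, _root_.tanh_lt_one _⟩, ?_⟩
      · have h1 : Real.tanh (-b) < Real.tanh (aa*x - b) :=
          tanh_strictMono (by nlinarith)
        have h2 : Real.tanh (-b) = ξ0 := by
          rw [← harcξ0]
          exact tanh_arctanh hξ0mem'.1 hξ0mem'.2
        linarith
      · show (arctanh (Real.tanh (aa*x - b)) + b)/aa = x
        rw [arctanh_tanh]
        field_simp
        ring
    · rintro x ⟨s, hs, rfl⟩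
      have h1 : arctanh ξ0 < arctanh s :=
        arctanh_strictMonoOn hξ0mem' (hsub1 hs) hs.1
      show 0 < (arctanh s + b)/aa
      rw [harcξ0] at h1
      exact div_pos (by linarith) haa0
  have hinj : Set.InjOn ψ (Set.Ioo ξ0 1) := by
    intro s hs t ht h
    have h2 : arctanh s = arctanh t := by
      have : (arctanh s + b)/aa = (arctanh t + b)/aa := h
      field_simp at this
      linarith
    exact arctanh_strictMonoOn.injOn (hsub1 hs) (hsub1 ht) h2
  have hψd : ∀ s ∈ Set.Ioo ξ0 1,
      HasDerivWithinAt ψ (1/(aa*(1-s^2))) (Set.Ioo ξ0 1) s := by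
    intro s hs
    obtain ⟨hs1, hs2⟩ := hsub1 hs
    have h1 := ((hasDerivAt_arctanh hs1 hs2).add_const b).div_const aa
    have h2 : 1/(1-s^2)/aa = 1/(aa*(1-s^2)) := by
      rw [div_div]; ring_nf
    rw [h2] at h1
    exact h1.hasDerivWithinAt
  -- pointwise form of the substituted integrands
  have hpoint1 : ∀ s ∈ Set.Ioo ξ0 1,
      |1/(aa*(1-s^2))| • ((deriv φ (ψ s))^2)
        = (aa*β^2*K^β) * (s^2*(1-s^2)^(β-1)) := by
    intro s hs
    obtain ⟨hs1, hs2⟩ := hsub1 hs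
    have h1s : (0:ℝ) < 1 - s^2 := by nlinarith
    have harg : aa * ψ s - b = arctanh s := by
      show aa * ((arctanh s + b)/aa) - b = arctanh s
      field_simp
      ring
    have hcosh2 : Real.cosh (arctanh s)^2 = 1/(1-s^2) := cosh_sq_arctanh hs1 hs2
    have hsc : Real.sinh (arctanh s)/Real.cosh (arctanh s) = s := by
      rw [← Real.tanh_eq_sinh_div_cosh]; exact tanh_arctanh hs1 hs2
    have hcinv : (1/Real.cosh (arctanh s))^2 = 1 - s^2 := by
      rw [div_pow, one_pow, hcosh2]
      simp [h1s.ne']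
    have hd := (hderivφ (ψ s)).deriv
    rw [hd, harg, hcinv, hsc]
    have hKs : 0 < K*(1-s^2) := by positivity
    have hX2 : ((K*(1-s^2))^r)^2 = K^β * (1-s^2)^β := by
      rw [pow_two, ← Real.rpow_add hKs, hrr, Real.mul_rpow hK0.le h1s.le]
    have expand : (-(aa*β) * ((K*(1-s^2))^r) * s)^2
        = (aa*β)^2 * (K^β*(1-s^2)^β) * s^2 := by
      rw [← hX2]; ring
    rw [smul_eq_mul, abs_of_pos (by positivity : (0:ℝ) < 1/(aa*(1-s^2))), expand,
      Real.rpow_sub_one h1s.ne']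
    field_simp
  have hpoint2 : ∀ s ∈ Set.Ioo ξ0 1,
      |1/(aa*(1-s^2))| • ((φ (ψ s))^(p+1))
        = (K^β*K/aa) * ((1-s^2)^β) := by
    intro s hs
    obtain ⟨hs1, hs2⟩ := hsub1 hs
    have h1s : (0:ℝ) < 1 - s^2 := by nlinarith
    have harg : aa * ψ s - b = arctanh s := by
      show aa * ((arctanh s + b)/aa) - b = arctanh s
      field_simp
      ring
    have hcosh2 : Real.cosh (arctanh s)^2 = 1/(1-s^2) := cosh_sq_arctanh hs1 hs2
    have hcinv : (1/Real.cosh (arctanh s))^2 = 1 - s^2 := by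
      rw [div_pow, one_pow, hcosh2]
      simp [h1s.ne']
    have hKs : 0 < K*(1-s^2) := by positivity
    have hφval : φ (ψ s) = (K*(1-s^2))^r := by
      rw [hφ']
      show (K * (1 / Real.cosh (aa * ψ s - b)) ^ 2) ^ r = (K*(1-s^2))^r
      rw [harg, hcinv]
    rw [hφval]
    have hpow : ((K*(1-s^2))^r)^(p+1) = (K^β*(1-s^2)^β) * (K*(1-s^2)) := by
      rw [← Real.rpow_mul hKs.le]
      rw [show r*(p+1) = β+1 by rw [hrdef, hβdef]; field_simp; ring]
      rw [Real.rpow_add_one hKs.ne', Real.mul_rpow hK0.le h1s.le]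
    rw [hpow, smul_eq_mul, abs_of_pos (by positivity : (0:ℝ) < 1/(aa*(1-s^2)))]
    field_simp
  -- the two integrals
  have hAfioo : Af β ξ0 = ∫ s in Set.Ioo ξ0 1, s^2*(1-s^2)^(β-1) := by
    show (∫ s in ξ0..1, s^2*(1-s^2)^(β-1)) = _
    rw [intervalIntegral.integral_of_le hξ0mem.2.le, MeasureTheory.integral_Ioc_eq_integral_Ioo]
  have hBfioo : Bf β ξ0 = ∫ s in Set.Ioo ξ0 1, (1-s^2)^β := by
    show (∫ s in ξ0..1, (1-s^2)^β) = _
    rw [intervalIntegral.integral_of_le hξ0mem.2.le, MeasureTheory.integral_Ioc_eq_integral_Ioo]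
  have hI1 : (∫ x in Set.Ioi (0:ℝ), (deriv φ x)^2)
      = (aa*β^2*K^β) * Af β ξ0 := by
    rw [himg, integral_image_eq_integral_abs_deriv_smul measurableSet_Ioo hψd hinj,
      MeasureTheory.setIntegral_congr_fun measurableSet_Ioo hpoint1, hAfioo,
      MeasureTheory.integral_const_mul]
  have hI2 : (∫ x in Set.Ioi (0:ℝ), (φ x)^(p+1))
      = (K^β*K/aa) * Bf β ξ0 := by
    rw [himg, integral_image_eq_integral_abs_deriv_smul measurableSet_Ioo hψd hinj,
      MeasureTheory.setIntegral_congr_fun measurableSet_Ioo hpoint2, hBfioo,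
      MeasureTheory.integral_const_mul]
  rw [hI1, hI2]
  have hAA := Af_eq hβ0 hβ1 hξ0mem
  have hE : (0:ℝ) < aa*β*K^β/2 := by positivity
  have key : (p-1)*(p-3)/(4*(p+1)) * ((K^β*K/aa) * Bf β ξ0) - (aa*β^2*K^β) * Af β ξ0
      = (aa*β*K^β/2) * ((p-5)/2 * Bf β ξ0 - ξ0*(1-ξ0^2)^β) := by
    have hAA' : Af β ξ0 = (Bf β ξ0 + ξ0*(1-ξ0^2)^β)/(2*β) := by
      rw [eq_div_iff (by positivity : (2*β) ≠ 0)]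
      linarith [hAA]
    rw [hAA', haadef, hKdef, hβdef, ← hww]
    have h2 : ((p+1)*(w*w)/2)^(2/(p-1)) ≠ 0 :=
      (Real.rpow_pos_of_pos (by positivity) _).ne'
    field_simp
    ring
  have hξeq' : (p-5)/2 * Bf (2/(p-1)) ξ₁ = ξ₁ * (1 - ξ₁^2) ^ (2/(p-1)) := hξeq
  have huniq' : ∀ ξ ∈ Set.Ioo (0:ℝ) 1,
      (p-5)/2 * Bf (2/(p-1)) ξ = ξ * (1 - ξ^2) ^ (2/(p-1)) → ξ = ξ₁ := huniq
  have hsgn := sign_iff p ξ₁ ξ0 hp hξ₁ hξeq' huniq' hξ0mem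
  have hfinal : ξ0 ≤ ξ₁ ↔ α^2/((N:ℝ)^2*ξ₁^2) ≤ ω := by
    have hNw : (0:ℝ) < (N:ℝ)*w := by positivity
    have hb0 : (0:ℝ) < ξ₁*((N:ℝ)*w) := mul_pos hξ₁.1 hNw
    have hξ0eq : ξ0 = (-α)/((N:ℝ)*w) := by
      rw [hξ0def, hc0def, neg_div]
    constructor
    · intro h
      rw [div_le_iff₀ (mul_pos (by positivity) (pow_pos hξ₁.1 2) : (0:ℝ) < (N:ℝ)^2*ξ₁^2)]
      rw [hξ0eq, div_le_iff₀ hNw] at h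
      have h2 := mul_le_mul h h (by linarith) hb0.le
      have e1 : (-α)*(-α) = α^2 := by ring
      have e2 : (ξ₁*((N:ℝ)*w))*(ξ₁*((N:ℝ)*w)) = ω*((N:ℝ)^2*ξ₁^2) := by rw [← hww]; ring
      linarith [h2, e1, e2]
    · intro h
      rw [div_le_iff₀ (mul_pos (by positivity) (pow_pos hξ₁.1 2) : (0:ℝ) < (N:ℝ)^2*ξ₁^2)] at h
      have e3 : (-α)^2 = α^2 := by ring
      have e4 : (ξ₁*((N:ℝ)*w))^2 = ω*((N:ℝ)^2*ξ₁^2) := by rw [← hww]; ring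
      have h1 : (-α)^2 ≤ (ξ₁*((N:ℝ)*w))^2 := by linarith [h, e3, e4]
      have h2 : -α ≤ ξ₁*((N:ℝ)*w) :=
        le_of_pow_le_pow_left₀ two_ne_zero hb0.le h1
      rw [hξ0eq, div_le_iff₀ hNw]
      linarith
  rw [← hfinal, ← hsgn]
  constructor
  · intro hle
    by_contra hneg
    push_neg at hneg
    have h3 := mul_neg_of_pos_of_neg hE hneg
    linarith [key, h3]
  · intro hX
    have h4 : 0 ≤ (aa*β*K^β/2) * ((p-5)/2 * Bf β ξ0 - ξ0*(1-ξ0^2)^β) :=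
      mul_nonneg hE.le hX
    linarith [key, h4]
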